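/- Let C be a shortest odd hole of a simple graph G, and let v ∈ V(G) be a C-major vertex with exactly four neighbours in V(C). Then either exactly one pair of these four neighbours is adjacent, or C is jewelled. -/

import Mathlib

open SimpleGraph

namespace SOH

variable {V : Type*}

/-- A walk is "induced" if every edge of `G` between vertices of the walk is an edge
of the walk. -/
def IsInducedWalk (G : SimpleGraph V) {u v : V} (P : G.Walk u v) : Prop :=
  ∀ x y : V, x ∈ P.support → y ∈ P.support → G.Adj x y → P.toSubgraph.Adj x y

/-- The interior of a path: its vertices other than the two ends. -/
def interior (G : SimpleGraph V) {u v : V} (P : G.Walk u v) : Set V :=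
  {x | x ∈ P.support} \ {u, v}

/-- A hole: an induced cycle of length at least 4. -/
def IsHole (G : SimpleGraph V) {u : V} (c : G.Walk u u) : Prop :=
  c.IsCycle ∧ 4 ≤ c.length ∧ IsInducedWalk G c

/-- An odd hole: a hole of odd length. -/
def IsOddHole (G : SimpleGraph V) {u : V} (c : G.Walk u u) : Prop :=
  IsHole G c ∧ Odd c.length

/-- A shortest odd hole: an odd hole of minimum length among all odd holes of `G`. -/
def IsShortestOddHole (G : SimpleGraph V) {u : V} (c : G.Walk u u) : Prop :=
  IsOddHole G c ∧ ∀ (w : V) (d : G.Walk w w), IsOddHole G d → c.length ≤ d.length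

/-- A vertex `v` is `C`-major if there is no three-vertex path of `C` containing all
neighbours of `v` in `V(C)`. -/
def CMajor (G : SimpleGraph V) {u : V} (c : G.Walk u u) (v : V) : Prop :=
  ¬ ∃ x y z : V, c.toSubgraph.Adj x y ∧ c.toSubgraph.Adj y z ∧ x ≠ z ∧
      ∀ w ∈ c.support, G.Adj v w → (w = x ∨ w = y ∨ w = z)

/-- A big `C`-major vertex: a `C`-major vertex with at least four neighbours in `V(C)`. -/
def BigCMajor (G : SimpleGraph V) {u : V} (c : G.Walk u u) (v : V) : Prop :=
  CMajor G c v ∧ 4 ≤ {w | w ∈ c.support ∧ G.Adj v w}.ncard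

/-- A hole `c` is jewelled. -/
def Jewelled (G : SimpleGraph V) {u : V} (c : G.Walk u u) : Prop :=
  (∃ c1 c2 c4 c5 c3 : V, ([c1, c2, c4, c5] : List V).Nodup ∧
      c.toSubgraph.Adj c1 c2 ∧ c.toSubgraph.Adj c2 c4 ∧ c.toSubgraph.Adj c4 c5 ∧
      G.Adj c3 c1 ∧ G.Adj c3 c5) ∨
  (∃ c1 c3 c5 c2 c4 : V, ([c1, c3, c5] : List V).Nodup ∧
      c.toSubgraph.Adj c1 c3 ∧ c.toSubgraph.Adj c3 c5 ∧
      c2 ∉ c.support ∧ c4 ∉ c.support ∧ c2 ≠ c4 ∧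
      G.Adj c1 c2 ∧ G.Adj c2 c4 ∧ G.Adj c4 c5 ∧
      ¬ G.Adj c1 c4 ∧ ¬ G.Adj c2 c5 ∧ ¬ G.Adj c1 c5)

/-- A pyramid in `G`, with apex `apex`, base `{b1, b2, b3}` and constituent paths
`P1, P2, P3`. -/
structure Pyramid (G : SimpleGraph V) where
  apex : V
  b1 : V
  b2 : V
  b3 : V
  P1 : G.Walk apex b1
  P2 : G.Walk apex b2
  P3 : G.Walk apex b3
  distinct : ([apex, b1, b2, b3] : List V).Nodup
  isPath1 : P1.IsPath
  isPath2 : P2.IsPath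
  isPath3 : P3.IsPath
  induced1 : IsInducedWalk G P1
  induced2 : IsInducedWalk G P2
  induced3 : IsInducedWalk G P3
  adj12 : G.Adj b1 b2
  adj13 : G.Adj b1 b3
  adj23 : G.Adj b2 b3
  twoLong : (2 ≤ P1.length ∧ 2 ≤ P2.length) ∨ (2 ≤ P1.length ∧ 2 ≤ P3.length) ∨
      (2 ≤ P2.length ∧ 2 ≤ P3.length)
  disj12 : {x | x ∈ P1.support} ∩ {x | x ∈ P2.support} = {apex}
  disj13 : {x | x ∈ P1.support} ∩ {x | x ∈ P3.support} = {apex}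
  disj23 : {x | x ∈ P2.support} ∩ {x | x ∈ P3.support} = {apex}
  edges12 : ∀ x y : V, x ∈ P1.support → y ∈ P2.support → x ≠ apex → y ≠ apex →
      G.Adj x y → x = b1 ∧ y = b2
  edges13 : ∀ x y : V, x ∈ P1.support → y ∈ P3.support → x ≠ apex → y ≠ apex →
      G.Adj x y → x = b1 ∧ y = b3
  edges23 : ∀ x y : V, x ∈ P2.support → y ∈ P3.support → x ≠ apex → y ≠ apex →
      G.Adj x y → x = b2 ∧ y = b3

/-- The vertex set of a pyramid. -/
def Pyramid.verts {G : SimpleGraph V} (H : Pyramid G) : Set V :=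
  {x | x ∈ H.P1.support} ∪ {x | x ∈ H.P2.support} ∪ {x | x ∈ H.P3.support}

/-- The closed walk `apex-P1-b1-b2-P2-apex` associated with a pyramid. -/
def Pyramid.hole {G : SimpleGraph V} (H : Pyramid G) : G.Walk H.apex H.apex :=
  H.P1.append (Walk.cons H.adj12 H.P2.reverse)

/-- A great pyramid: the hole `apex-P1-b1-b2-P2-apex` is a shortest odd hole and `P3` is
strictly shorter than `P1` and `P2`. -/
structure GreatPyramid (G : SimpleGraph V) extends Pyramid G where
  holeShortest : IsShortestOddHole G toPyramid.hole
  short31 : toPyramid.P3.length < toPyramid.P1.length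
  short32 : toPyramid.P3.length < toPyramid.P2.length

/-- The heart of a great pyramid: `V(P3) \ {apex}`. -/
def GreatPyramid.heart {G : SimpleGraph V} (H : GreatPyramid G) : Set V :=
  {x | x ∈ H.P3.support} \ {H.apex}

/-- An optimal great pyramid: one of minimum height (= length of `P3`). -/
def GreatPyramid.Optimal {G : SimpleGraph V} (H : GreatPyramid G) : Prop :=
  ∀ H' : GreatPyramid G, H.P3.length ≤ H'.P3.length

/-- `L1, L2` are the two subpaths of the cycle `c` joining `u` and `v`. -/
def IsSplit (G : SimpleGraph V) {w u v : V} (c : G.Walk w w) (L1 L2 : G.Walk u v) : Prop :=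
  L1.IsPath ∧ L2.IsPath ∧
  {x | x ∈ L1.support} ∩ {x | x ∈ L2.support} = {u, v} ∧
  {x | x ∈ L1.support} ∪ {x | x ∈ L2.support} = {x | x ∈ c.support} ∧
  (∀ e ∈ L1.edges, e ∈ c.edges) ∧ (∀ e ∈ L2.edges, e ∈ c.edges) ∧
  L1.length + L2.length = c.length

/-- A shortcut for a (shortest odd) hole `c`: a path joining two distinct nonadjacent
vertices of `c`, shorter than both arcs of `c` between them, containing no big
`c`-major vertex. -/
def IsShortcut (G : SimpleGraph V) {w u v : V} (c : G.Walk w w) (P : G.Walk u v) : Prop :=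
  u ∈ c.support ∧ v ∈ c.support ∧ u ≠ v ∧ ¬ G.Adj u v ∧ P.IsPath ∧
  (∀ L1 L2 : G.Walk u v, IsSplit G c L1 L2 → P.length < min L1.length L2.length) ∧
  ∀ x ∈ P.support, ¬ BigCMajor G c x



/-! ### Auxiliary lemmas -/

section Aux

variable {G : SimpleGraph V}

lemma nodup4 {a b c d : V} (h1 : a ≠ b) (h2 : a ≠ c) (h3 : a ≠ d) (h4 : b ≠ c)
    (h5 : b ≠ d) (h6 : c ≠ d) : ([a, b, c, d] : List V).Nodup := by
  simp [h1, h2, h3, h4, h5, h6]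

lemma toSubgraph_adj_iff_mem_edges {a b : V} (w : G.Walk a b) (x y : V) :
    w.toSubgraph.Adj x y ↔ s(x, y) ∈ w.edges := by
  rw [← SimpleGraph.Subgraph.mem_edgeSet, Walk.mem_edges_toSubgraph]

lemma closed_eq_nil {s : V} (q : G.Walk s s) (h : s ∉ q.support.tail) : q.length = 0 := by
  cases q with
  | nil => rfl
  | cons r p =>
    exfalso
    have hmem := Walk.end_mem_support p
    simp only [Walk.support_cons, List.tail_cons] at h
    exact h hmem

lemma mem_support_closed_iff {s : V} (q : G.Walk s s) (hq : q.length ≠ 0) (a : V) :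
    a ∈ q.support ↔ a ∈ q.support.tail := by
  cases q with
  | nil => simp at hq
  | cons r p =>
    simp only [Walk.support_cons, List.tail_cons, List.mem_cons]
    constructor
    · rintro (rfl | h)
      · exact Walk.end_mem_support p
      · exact h
    · exact fun h => Or.inr h

/-- In a path, an edge joining the two endpoints forces length 1. -/
lemma path_edge_ends {p q : V} (P : G.Walk p q) (hP : P.IsPath) (he : s(p, q) ∈ P.edges) :
    P.length = 1 := by
  cases P with
  | nil => simp at he
  | @cons _ m _ r rest =>
    rw [Walk.edges_cons] at he
    rw [Walk.cons_isPath_iff] at hP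
    rcases List.mem_cons.mp he with h | h
    · rw [Sym2.eq_iff] at h
      rcases h with ⟨-, rfl⟩ | ⟨h1, -⟩
      · have : rest = Walk.nil := Walk.isPath_iff_eq_nil.mp hP.1
        subst this; rfl
      · exact absurd (h1 ▸ Walk.start_mem_support rest) hP.2
    · exact absurd (Walk.fst_mem_support_of_mem_edges rest h) hP.2

lemma walk_length_one {p q : V} (P : G.Walk p q) (h : P.length = 1) :
    G.Adj p q ∧ P.edges = [s(p, q)] := by
  cases P with
  | nil => simp at h
  | @cons _ m _ r rest =>
    rw [Walk.length_cons] at h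
    have h0 : rest.length = 0 := by omega
    have hm : m = q := Walk.eq_of_length_eq_zero h0
    subst hm
    have : rest = Walk.nil := Walk.nil_iff_eq_nil.mp (Walk.length_eq_zero_iff.mp h0)
    subst this
    exact ⟨r, rfl⟩

lemma takeUntil_cons' [DecidableEq V] {a a' b y : V} (r : G.Adj a a') (p : G.Walk a' b)
    (hy : y ∈ (Walk.cons r p).support) (hne : a ≠ y) (hy' : y ∈ p.support) :
    (Walk.cons r p).takeUntil y hy = Walk.cons r (p.takeUntil y hy') := by
  rw [Walk.takeUntil]; simp [dif_neg hne]

lemma length_zero_support {a b : V} (w : G.Walk a b) (h : w.length = 0) : w.support = [a] := by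
  cases w with
  | nil => rfl
  | cons r p => simp at h

lemma length_takeUntil_lt [DecidableEq V] {a b : V} (w : G.Walk a b) :
    ∀ (y z : V) (hy : y ∈ w.support) (hz : z ∈ (w.takeUntil y hy).support), z ≠ y →
      ∃ hz' : z ∈ w.support, (w.takeUntil z hz').length < (w.takeUntil y hy).length := by
  induction w with
  | nil =>
    intro y z hy hz hne
    have hy0 : ((Walk.nil : G.Walk _ _).takeUntil y hy).length = 0 := by
      simpa using Walk.length_takeUntil_le _ hy
    rw [length_zero_support _ hy0] at hz
    simp only [List.mem_singleton] at hz
    simp only [Walk.support_nil, List.mem_singleton] at hy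
    exact absurd (hz.trans hy.symm) hne
  | @cons a a' b r p ih =>
    intro y z hy hz hne
    by_cases hay : a = y
    · subst hay
      have h0 : ((Walk.cons r p).takeUntil a hy).length = 0 := by
        rw [Walk.takeUntil]; simp
      rw [length_zero_support _ h0] at hz
      simp only [List.mem_singleton] at hz
      exact absurd hz hne
    · have hy' : y ∈ p.support := by
        cases hy with
        | head => exact absurd rfl hay
        | tail _ h => exact h
      rw [takeUntil_cons' r p hy hay hy'] at hz
      by_cases haz : a = z
      · subst haz
        refine ⟨Walk.start_mem_support _, ?_⟩
        have h0 : ((Walk.cons r p).takeUntil a (Walk.start_mem_support _)).length = 0 := by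
          rw [Walk.takeUntil]; simp
        rw [h0, takeUntil_cons' r p _ hay hy']
        simp
      · have hz2 : z ∈ (p.takeUntil y hy').support := by
          cases hz with
          | head => exact absurd rfl haz
          | tail _ h => exact h
        obtain ⟨hz', hlt⟩ := ih y z hy' hz2 hne
        have hzc : z ∈ (Walk.cons r p).support := by simp [hz']
        refine ⟨hzc, ?_⟩
        rw [takeUntil_cons' r p hzc haz hz', takeUntil_cons' r p hy hay hy']
        simpa using hlt

/-- Building an odd hole through `v` and a suitable path `P`. -/
lemma hole_through (v p q : V) (P : G.Walk p q) (hpath : P.IsPath)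
    (hvp : G.Adj v p) (hqv : G.Adj q v) (hvP : v ∉ P.support)
    (hPind : ∀ x y : V, x ∈ P.support → y ∈ P.support → G.Adj x y → s(x, y) ∈ P.edges)
    (hNin : ∀ y ∈ P.support, G.Adj v y → y = p ∨ y = q)
    (hodd : Odd P.length) (h3 : 3 ≤ P.length) :
    ∃ (h : G.Walk v v), IsOddHole G h ∧ h.length = P.length + 2 := by
  have hpq : p ≠ q := by
    rintro rfl
    have := closed_eq_nil P (by
      have := hpath.support_nodup
      rw [Walk.support_eq_cons] at this
      exact (List.nodup_cons.mp this).1)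
    omega
  have hlen : (Walk.cons hvp (P.concat hqv)).length = P.length + 2 := by
    simp [Walk.length_concat]
  refine ⟨Walk.cons hvp (P.concat hqv), ?_, hlen⟩
  have hsupp : (Walk.cons hvp (P.concat hqv)).support = v :: (P.support ++ [v]) := by
    simp [Walk.support_concat, List.concat_eq_append]
  have hedges : (Walk.cons hvp (P.concat hqv)).edges = s(v, p) :: (P.edges ++ [s(q, v)]) := by
    simp [Walk.edges_concat, List.concat_eq_append]
  have hvp' : v ≠ p := G.ne_of_adj hvp
  have hvq : v ≠ q := fun h => G.ne_of_adj hqv h.symm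
  have hcyc : (Walk.cons hvp (P.concat hqv)).IsCycle := by
    constructor
    constructor
    constructor
    · rw [hedges]
      refine List.nodup_cons.mpr ⟨?_, ?_⟩
      · intro hmem
        rcases List.mem_append.mp hmem with h | h
        · exact hvP (Walk.fst_mem_support_of_mem_edges P h)
        · rw [List.mem_singleton, Sym2.eq_iff] at h
          rcases h with ⟨h1, h2⟩ | ⟨-, h2⟩
          · exact hvq h1
          · exact hpq h2
      · refine List.Nodup.append hpath.isTrail.edges_nodup (List.nodup_singleton _) ?_
        intro e he he'
        rw [List.mem_singleton] at he'
        subst he'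
        exact hvP (Walk.snd_mem_support_of_mem_edges P he)
    · simp
    · rw [hsupp]
      simp only [List.tail_cons]
      rw [List.nodup_append]
      exact ⟨hpath.support_nodup, List.nodup_singleton _, by
        intro a ha b hb; rw [List.mem_singleton] at hb; rw [hb]; rintro rfl; exact hvP ha⟩
  refine ⟨⟨hcyc, by omega, ?_⟩, by rw [hlen]; exact hodd.add_even (by decide)⟩
  intro x y hx hy hxy
  rw [toSubgraph_adj_iff_mem_edges, hedges]
  rw [hsupp] at hx hy
  simp only [List.mem_cons, List.mem_append, List.mem_singleton] at hx hy
  have hx' : x = v ∨ x ∈ P.support := by tauto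
  have hy' : y = v ∨ y ∈ P.support := by tauto
  rcases hx' with rfl | hx'
  · rcases hy' with rfl | hy'
    · exact absurd hxy (G.irrefl)
    · rcases hNin y hy' hxy with rfl | rfl
      · exact List.mem_cons_self
      · exact List.mem_cons_of_mem _ (List.mem_append.mpr (Or.inr (by simp [Sym2.eq_swap])))
  · rcases hy' with rfl | hy'
    · rcases hNin x hx' hxy.symm with rfl | rfl
      · exact List.mem_cons.mpr (Or.inl (Sym2.eq_swap))
      · exact List.mem_cons_of_mem _ (List.mem_append.mpr (Or.inr (by simp)))
    · exact List.mem_cons_of_mem _ (List.mem_append.mpr (Or.inl (hPind x y hx' hy' hxy)))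

end Aux

set_option maxHeartbeats 8000000 in
/-- a `C`-major vertex with exactly four neighbours in `V(C)` (where `C` is
a shortest odd hole) has exactly one adjacent pair among these four neighbours, unless
`C` is jewelled. -/
theorem cMajor_four_neighbours (G : SimpleGraph V) {u : V} (c : G.Walk u u)
    (hc : IsShortestOddHole G c) (v : V) (hv : CMajor G c v)
    (h4 : ({w | w ∈ c.support ∧ G.Adj v w}).ncard = 4) :
    (∃ x1 x2 x3 x4 : V, ([x1, x2, x3, x4] : List V).Nodup ∧
      {w | w ∈ c.support ∧ G.Adj v w} = {x1, x2, x3, x4} ∧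
      G.Adj x1 x2 ∧ ¬ G.Adj x1 x3 ∧ ¬ G.Adj x1 x4 ∧ ¬ G.Adj x2 x3 ∧
      ¬ G.Adj x2 x4 ∧ ¬ G.Adj x3 x4) ∨
    Jewelled G c := by
  classical
  obtain ⟨⟨⟨hcyc, hlen4, hindc⟩, hoddn⟩, hminOH⟩ := hc
  obtain ⟨mo, hmo⟩ := hoddn
  have hindE : ∀ x y : V, x ∈ c.support → y ∈ c.support → G.Adj x y → s(x, y) ∈ c.edges := by
    intro x y hx hy hxy
    have := hindc x y hx hy hxy
    rwa [toSubgraph_adj_iff_mem_edges] at this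
  set N := {w | w ∈ c.support ∧ G.Adj v w} with hNdef
  have hNfin : N.Finite := (c.support.finite_toSet).subset (fun x hx => hx.1)
  obtain ⟨x1, hx1N⟩ : N.Nonempty := Set.nonempty_of_ncard_ne_zero (by rw [h4]; omega)
  have hx1c : x1 ∈ c.support := hx1N.1
  have hv1 : G.Adj v x1 := hx1N.2
  set d := c.rotate x1 hx1c with hd
  have hdcyc : d.IsCycle := hcyc.rotate hx1c
  have hdlen : d.length = c.length := by
    have h1 := congrArg Walk.length (c.take_spec hx1c)
    rw [Walk.length_append] at h1
    rw [hd]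
    simp only [Walk.rotate, Walk.length_append]
    omega
  have hdE : ∀ e, e ∈ d.edges ↔ e ∈ c.edges := fun e => (c.rotate_edges x1 hx1c).mem_iff
  have hdS : ∀ a, a ∈ d.support ↔ a ∈ c.support := by
    intro a
    rw [mem_support_closed_iff d (by omega) a, mem_support_closed_iff c (by omega) a]
    exact (c.support_rotate x1 hx1c).mem_iff
  have hNd : ∀ z, z ∈ N → z ∈ d.support := fun z hz => (hdS z).mpr hz.1
  -- choose x2
  have hne1 : (N \ {x1}).Nonempty := by
    rw [Set.nonempty_iff_ne_empty]
    intro h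
    have hsub : N ⊆ {x1} := by
      intro a ha
      by_contra hc'
      exact (Set.eq_empty_iff_forall_notMem.mp h a) ⟨ha, hc'⟩
    have := Set.ncard_le_ncard hsub (Set.finite_singleton x1)
    rw [h4, Set.ncard_singleton] at this
    omega
  obtain ⟨x2, hx2N1, hx2min⟩ := Set.exists_min_image (N \ {x1})
    (fun y => if h : y ∈ d.support then (d.takeUntil y h).length else 0)
    hNfin.sdiff hne1
  have hx2N : x2 ∈ N := hx2N1.1
  have hne21 : x2 ≠ x1 := by simpa using hx2N1.2
  have hv2 : G.Adj v x2 := hx2N.2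
  have hx2d : x2 ∈ d.support := hNd x2 hx2N
  set P1 := d.takeUntil x2 hx2d with hP1def
  set d2 := d.dropUntil x2 hx2d with hd2def
  have hsp1 : P1.append d2 = d := by rw [hP1def, hd2def]; exact d.take_spec hx2d
  have hP1free : ∀ z, z ∈ P1.support → z ∈ N → z = x1 ∨ z = x2 := by
    intro z hzP hzN
    by_cases hz1 : z = x1
    · exact Or.inl hz1
    by_cases hz2 : z = x2
    · exact Or.inr hz2
    exfalso
    obtain ⟨hz', hlt⟩ := length_takeUntil_lt d x2 z hx2d hzP hz2
    have hle : (if h : x2 ∈ d.support then (d.takeUntil x2 h).length else 0) ≤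
        (if h : z ∈ d.support then (d.takeUntil z h).length else 0) :=
      hx2min z ⟨hzN, by simp [hz1]⟩
    rw [dif_pos hx2d, dif_pos hz'] at hle
    omega
  have hmemd2 : ∀ z, z ∈ N → z ≠ x1 → z ≠ x2 → z ∈ d2.support := by
    intro z hz hz1 hz2
    have hzd : z ∈ d.support := hNd z hz
    rw [← hsp1, Walk.mem_support_append_iff] at hzd
    rcases hzd with h | h
    · rcases hP1free z h hz with rfl | rfl
      · exact absurd rfl hz1
      · exact absurd rfl hz2
    · exact h
  -- choose x3
  have hne2 : (N \ {x1, x2}).Nonempty := by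
    rw [Set.nonempty_iff_ne_empty]
    intro h
    have hsub : N ⊆ {x1, x2} := by
      intro a ha
      by_contra hc'
      exact (Set.eq_empty_iff_forall_notMem.mp h a) ⟨ha, hc'⟩
    have h5 := Set.ncard_le_ncard hsub ((Set.finite_singleton x2).insert x1)
    have h6 : ({x1, x2} : Set V).ncard ≤ 2 := by
      refine le_trans (Set.ncard_insert_le _ _) ?_
      simp
    rw [h4] at h5
    omega
  obtain ⟨x3, hx3N2, hx3min⟩ := Set.exists_min_image (N \ {x1, x2})
    (fun y => if h : y ∈ d2.support then (d2.takeUntil y h).length else 0)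
    hNfin.sdiff hne2
  have hx3N : x3 ∈ N := hx3N2.1
  have hne31 : x3 ≠ x1 := by intro h; exact hx3N2.2 (by simp [h])
  have hne32 : x3 ≠ x2 := by intro h; exact hx3N2.2 (by simp [h])
  have hv3 : G.Adj v x3 := hx3N.2
  have hx3d2 : x3 ∈ d2.support := hmemd2 x3 hx3N hne31 hne32
  set P2 := d2.takeUntil x3 hx3d2 with hP2def
  set d3 := d2.dropUntil x3 hx3d2 with hd3def
  have hsp2 : P2.append d3 = d2 := by rw [hP2def, hd3def]; exact d2.take_spec hx3d2
  have hP2free : ∀ z, z ∈ P2.support → z ∈ N → z ≠ x1 → z = x2 ∨ z = x3 := by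
    intro z hzP hzN hz1
    by_cases hz2 : z = x2
    · exact Or.inl hz2
    by_cases hz3 : z = x3
    · exact Or.inr hz3
    exfalso
    obtain ⟨hz', hlt⟩ := length_takeUntil_lt d2 x3 z hx3d2 hzP hz3
    have hle : (if h : x3 ∈ d2.support then (d2.takeUntil x3 h).length else 0) ≤
        (if h : z ∈ d2.support then (d2.takeUntil z h).length else 0) :=
      hx3min z ⟨hzN, by simp [hz1, hz2]⟩
    rw [dif_pos hx3d2, dif_pos hz'] at hle
    omega
  have hmemd3 : ∀ z, z ∈ N → z ≠ x1 → z ≠ x2 → z ≠ x3 → z ∈ d3.support := by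
    intro z hz hz1 hz2 hz3
    have hzd : z ∈ d2.support := hmemd2 z hz hz1 hz2
    rw [← hsp2, Walk.mem_support_append_iff] at hzd
    rcases hzd with h | h
    · rcases hP2free z h hz hz1 with rfl | rfl
      · exact absurd rfl hz2
      · exact absurd rfl hz3
    · exact h
  -- choose x4
  obtain ⟨x4, hx4N3⟩ : (N \ {x1, x2, x3}).Nonempty := by
    rw [Set.nonempty_iff_ne_empty]
    intro h
    have hsub : N ⊆ {x1, x2, x3} := by
      intro a ha
      by_contra hc'
      exact (Set.eq_empty_iff_forall_notMem.mp h a) ⟨ha, hc'⟩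
    have h5 := Set.ncard_le_ncard hsub
      (((Set.finite_singleton x3).insert x2).insert x1)
    have h6 : ({x1, x2, x3} : Set V).ncard ≤ 3 := by
      refine le_trans (Set.ncard_insert_le _ _) ?_
      have h7 := Set.ncard_insert_le x2 ({x3} : Set V)
      simp only [Set.ncard_singleton] at h7
      omega
    rw [h4] at h5
    omega
  have hx4N : x4 ∈ N := hx4N3.1
  have hne41 : x4 ≠ x1 := by intro h; exact hx4N3.2 (by simp [h])
  have hne42 : x4 ≠ x2 := by intro h; exact hx4N3.2 (by simp [h])
  have hne43 : x4 ≠ x3 := by intro h; exact hx4N3.2 (by simp [h])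
  have hv4 : G.Adj v x4 := hx4N.2
  have hx4d3 : x4 ∈ d3.support := hmemd3 x4 hx4N hne41 hne42 hne43
  set P3 := d3.takeUntil x4 hx4d3 with hP3def
  set P4 := d3.dropUntil x4 hx4d3 with hP4def
  have hsp3 : P3.append P4 = d3 := by rw [hP3def, hP4def]; exact d3.take_spec hx4d3
  -- symmetric inequalities
  have n12 : x1 ≠ x2 := Ne.symm hne21
  have n13 : x1 ≠ x3 := Ne.symm hne31
  have n14 : x1 ≠ x4 := Ne.symm hne41
  have n23 : x2 ≠ x3 := Ne.symm hne32
  have n24 : x2 ≠ x4 := Ne.symm hne42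
  have n34 : x3 ≠ x4 := Ne.symm hne43
  -- decomposition
  have hD : d = P1.append (P2.append (P3.append P4)) := by
    rw [hsp3, hsp2, hsp1]
  have hsum : P1.length + P2.length + P3.length + P4.length = c.length := by
    have h1 := congrArg Walk.length hD
    simp only [Walk.length_append] at h1
    omega
  have hg1 : 1 ≤ P1.length := by
    by_contra h
    exact hne21 (Walk.eq_of_length_eq_zero (by omega : P1.length = 0)).symm
  have hg2 : 1 ≤ P2.length := by
    by_contra h
    exact hne32 (Walk.eq_of_length_eq_zero (by omega : P2.length = 0)).symm
  have hg3 : 1 ≤ P3.length := by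
    by_contra h
    exact hne43 (Walk.eq_of_length_eq_zero (by omega : P3.length = 0)).symm
  have hg4 : 1 ≤ P4.length := by
    by_contra h
    exact hne41 (Walk.eq_of_length_eq_zero (by omega : P4.length = 0))
  -- tail support decomposition
  have htail : d.support.tail =
      P1.support.tail ++ (P2.support.tail ++ (P3.support.tail ++ P4.support.tail)) := by
    rw [hD, Walk.tail_support_append, Walk.tail_support_append, Walk.tail_support_append]
  have hnd := hdcyc.support_nodup
  rw [htail] at hnd
  simp only [List.nodup_append', List.disjoint_append_right] at hnd
  obtain ⟨nd1, ⟨nd2, ⟨nd3, nd4, dj34⟩, dj23, dj24⟩, dj12, dj13, dj14⟩ := hnd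
  have hs1 : P1.support = x1 :: P1.support.tail := Walk.support_eq_cons P1
  have hs2 : P2.support = x2 :: P2.support.tail := Walk.support_eq_cons P2
  have hs3 : P3.support = x3 :: P3.support.tail := Walk.support_eq_cons P3
  have hs4 : P4.support = x4 :: P4.support.tail := Walk.support_eq_cons P4
  have o2 : x2 ∈ P1.support.tail := Walk.end_mem_tail_support_of_ne (Ne.symm hne21) P1
  have o3 : x3 ∈ P2.support.tail := Walk.end_mem_tail_support_of_ne (Ne.symm hne32) P2
  have o4 : x4 ∈ P3.support.tail := Walk.end_mem_tail_support_of_ne (Ne.symm hne43) P3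
  have o1 : x1 ∈ P4.support.tail := Walk.end_mem_tail_support_of_ne hne41 P4
  -- cross-support lemmas
  have L12 : ∀ a, a ∈ P1.support → a ∈ P2.support → a = x2 := by
    intro a h1 h2
    rw [hs1, List.mem_cons] at h1
    rw [hs2, List.mem_cons] at h2
    rcases h1 with rfl | h1
    · rcases h2 with h2 | h2
      · exact h2
      · exact absurd o1 (dj24 h2)
    · rcases h2 with h2 | h2
      · exact h2
      · exact absurd h2 (dj12 h1)
  have L23 : ∀ a, a ∈ P2.support → a ∈ P3.support → a = x3 := by
    intro a h1 h2
    rw [hs2, List.mem_cons] at h1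
    rw [hs3, List.mem_cons] at h2
    rcases h1 with rfl | h1
    · rcases h2 with h2 | h2
      · exact h2
      · exact absurd h2 (dj13 o2)
    · rcases h2 with h2 | h2
      · exact h2
      · exact absurd h2 (dj23 h1)
  have L34 : ∀ a, a ∈ P3.support → a ∈ P4.support → a = x4 := by
    intro a h1 h2
    rw [hs3, List.mem_cons] at h1
    rw [hs4, List.mem_cons] at h2
    rcases h1 with rfl | h1
    · rcases h2 with h2 | h2
      · exact h2
      · exact absurd h2 (dj24 o3)
    · rcases h2 with h2 | h2
      · exact h2
      · exact absurd h2 (dj34 h1)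
  have L41 : ∀ a, a ∈ P4.support → a ∈ P1.support → a = x1 := by
    intro a h1 h2
    rw [hs4, List.mem_cons] at h1
    rw [hs1, List.mem_cons] at h2
    rcases h1 with rfl | h1
    · rcases h2 with h2 | h2
      · exact h2
      · exact absurd o4 (dj13 h2)
    · rcases h2 with h2 | h2
      · exact h2
      · exact absurd h1 (dj14 h2)
  have L13 : ∀ a, a ∈ P1.support → a ∈ P3.support → False := by
    intro a h1 h2
    rw [hs1, List.mem_cons] at h1
    rw [hs3, List.mem_cons] at h2
    rcases h1 with rfl | h1
    · rcases h2 with h2 | h2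
      · exact hne31 h2.symm
      · exact dj34 h2 o1
    · rcases h2 with rfl | h2
      · exact dj12 h1 o3
      · exact dj13 h1 h2
  have L24 : ∀ a, a ∈ P2.support → a ∈ P4.support → False := by
    intro a h1 h2
    rw [hs2, List.mem_cons] at h1
    rw [hs4, List.mem_cons] at h2
    rcases h1 with rfl | h1
    · rcases h2 with h2 | h2
      · exact hne42 h2.symm
      · exact dj14 o2 h2
    · rcases h2 with rfl | h2
      · exact dj23 h1 o4
      · exact dj24 h1 h2
  -- the segments are paths
  have pth1 : P1.IsPath := by
    rw [Walk.isPath_def, hs1]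
    exact List.nodup_cons.mpr ⟨fun h => dj14 h o1, nd1⟩
  have pth2 : P2.IsPath := by
    rw [Walk.isPath_def, hs2]
    exact List.nodup_cons.mpr ⟨fun h => dj12 o2 h, nd2⟩
  have pth3 : P3.IsPath := by
    rw [Walk.isPath_def, hs3]
    exact List.nodup_cons.mpr ⟨fun h => dj23 o3 h, nd3⟩
  have pth4 : P4.IsPath := by
    rw [Walk.isPath_def, hs4]
    exact List.nodup_cons.mpr ⟨fun h => dj34 o4 h, nd4⟩
  -- supports live on c
  have hsub1 : ∀ a, a ∈ P1.support → a ∈ c.support := fun a h =>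
    (hdS a).mp (d.support_takeUntil_subset hx2d h)
  have hsubd2 : ∀ a, a ∈ d2.support → a ∈ d.support := fun a h =>
    d.support_dropUntil_subset hx2d h
  have hsub2 : ∀ a, a ∈ P2.support → a ∈ c.support := fun a h =>
    (hdS a).mp (hsubd2 a (d2.support_takeUntil_subset hx3d2 h))
  have hsubd3 : ∀ a, a ∈ d3.support → a ∈ d.support := fun a h =>
    hsubd2 a (d2.support_dropUntil_subset hx3d2 h)
  have hsub3 : ∀ a, a ∈ P3.support → a ∈ c.support := fun a h =>
    (hdS a).mp (hsubd3 a (d3.support_takeUntil_subset hx4d3 h))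
  have hsub4 : ∀ a, a ∈ P4.support → a ∈ c.support := fun a h =>
    (hdS a).mp (hsubd3 a (d3.support_dropUntil_subset hx4d3 h))
  -- edge decomposition
  have hedge_loc : ∀ e, e ∈ d.edges ↔
      (e ∈ P1.edges ∨ e ∈ P2.edges ∨ e ∈ P3.edges ∨ e ∈ P4.edges) := by
    intro e
    rw [hD]
    simp only [Walk.edges_append, List.mem_append]
  have hGadjE : ∀ a b, a ∈ c.support → b ∈ c.support → G.Adj a b →
      (s(a, b) ∈ P1.edges ∨ s(a, b) ∈ P2.edges ∨ s(a, b) ∈ P3.edges ∨ s(a, b) ∈ P4.edges) := by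
    intro a b ha hb hab
    exact (hedge_loc _).mp ((hdE _).mpr (hindE a b ha hb hab))
  have sm1 : x1 ∈ P1.support := Walk.start_mem_support _
  have em1 : x2 ∈ P1.support := Walk.end_mem_support _
  have sm2 : x2 ∈ P2.support := Walk.start_mem_support _
  have em2 : x3 ∈ P2.support := Walk.end_mem_support _
  have sm3 : x3 ∈ P3.support := Walk.start_mem_support _
  have em3 : x4 ∈ P3.support := Walk.end_mem_support _
  have sm4 : x4 ∈ P4.support := Walk.start_mem_support _
  have em4 : x1 ∈ P4.support := Walk.end_mem_support _
  have hvn1 : v ≠ x1 := G.ne_of_adj hv1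
  have hvn2 : v ≠ x2 := G.ne_of_adj hv2
  have hvn3 : v ≠ x3 := G.ne_of_adj hv3
  have hvn4 : v ≠ x4 := G.ne_of_adj hv4
  -- v is not on the hole
  have iv1 : v ∉ P1.support := by
    intro hvP
    have hvc : v ∈ c.support := hsub1 v hvP
    rcases hGadjE v x3 hvc hx3N.1 hv3 with h | h | h | h
    · exact L13 x3 (Walk.snd_mem_support_of_mem_edges P1 h) sm3
    · exact hvn2 (L12 v hvP (Walk.fst_mem_support_of_mem_edges P2 h))
    · exact L13 v hvP (Walk.fst_mem_support_of_mem_edges P3 h)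
    · exact hvn1 (L41 v (Walk.fst_mem_support_of_mem_edges P4 h) hvP)
  have iv2 : v ∉ P2.support := by
    intro hvP
    have hvc : v ∈ c.support := hsub2 v hvP
    rcases hGadjE v x4 hvc hx4N.1 hv4 with h | h | h | h
    · exact hvn2 (L12 v (Walk.fst_mem_support_of_mem_edges P1 h) hvP)
    · exact L24 x4 (Walk.snd_mem_support_of_mem_edges P2 h) sm4
    · exact hvn3 (L23 v hvP (Walk.fst_mem_support_of_mem_edges P3 h))
    · exact L24 v hvP (Walk.fst_mem_support_of_mem_edges P4 h)
  have iv3 : v ∉ P3.support := by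
    intro hvP
    have hvc : v ∈ c.support := hsub3 v hvP
    rcases hGadjE v x1 hvc hx1c hv1 with h | h | h | h
    · exact L13 v (Walk.fst_mem_support_of_mem_edges P1 h) hvP
    · exact hvn3 (L23 v (Walk.fst_mem_support_of_mem_edges P2 h) hvP)
    · exact hne41 (L34 x1 (Walk.snd_mem_support_of_mem_edges P3 h) em4).symm
    · exact hvn4 (L34 v hvP (Walk.fst_mem_support_of_mem_edges P4 h))
  have iv4 : v ∉ P4.support := by
    intro hvP
    have hvc : v ∈ c.support := hsub4 v hvP
    rcases hGadjE v x2 hvc hx2N.1 hv2 with h | h | h | h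
    · exact hvn1 (L41 v hvP (Walk.fst_mem_support_of_mem_edges P1 h))
    · exact L24 v (Walk.fst_mem_support_of_mem_edges P2 h) hvP
    · exact hvn4 (L34 v (Walk.fst_mem_support_of_mem_edges P3 h) hvP)
    · exact L24 x2 sm2 (Walk.snd_mem_support_of_mem_edges P4 h)
  -- N is exactly the four vertices
  have hNeq : N = {x1, x2, x3, x4} := by
    refine (Set.eq_of_subset_of_ncard_le ?_ ?_ hNfin).symm
    · intro a ha
      simp only [Set.mem_insert_iff, Set.mem_singleton_iff] at ha
      rcases ha with rfl | rfl | rfl | rfl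
      exacts [hx1N, hx2N, hx3N, hx4N]
    · rw [h4]
      rw [Set.ncard_insert_of_notMem (by simp [n12, n13, n14])
          (((Set.finite_singleton x4).insert x3).insert x2),
        Set.ncard_insert_of_notMem (by simp [n23, n24]) ((Set.finite_singleton x4).insert x3),
        Set.ncard_insert_of_notMem (by simp [n34]) (Set.finite_singleton x4),
        Set.ncard_singleton]
  have hNmem : ∀ a, a ∈ N → a = x1 ∨ a = x2 ∨ a = x3 ∨ a = x4 := by
    intro a ha
    rw [hNeq] at ha
    simpa using ha
  -- no neighbour of v in segment interiors
  have free1 : ∀ y ∈ P1.support, G.Adj v y → y = x1 ∨ y = x2 := by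
    intro y hy hvy
    rcases hNmem y ⟨hsub1 y hy, hvy⟩ with h | h | h | h
    · exact Or.inl h
    · exact Or.inr h
    · rw [h] at hy; exact (L13 x3 hy sm3).elim
    · rw [h] at hy; exact (hne41 (L41 x4 sm4 hy)).elim
  have free2 : ∀ y ∈ P2.support, G.Adj v y → y = x2 ∨ y = x3 := by
    intro y hy hvy
    rcases hNmem y ⟨hsub2 y hy, hvy⟩ with h | h | h | h
    · rw [h] at hy; exact (n12 (L12 x1 sm1 hy)).elim
    · exact Or.inl h
    · exact Or.inr h
    · rw [h] at hy; exact (L24 x4 hy sm4).elim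
  have free3 : ∀ y ∈ P3.support, G.Adj v y → y = x3 ∨ y = x4 := by
    intro y hy hvy
    rcases hNmem y ⟨hsub3 y hy, hvy⟩ with h | h | h | h
    · rw [h] at hy; exact (hne41 (L34 x1 hy em4).symm).elim
    · rw [h] at hy; exact (n23 (L23 x2 sm2 hy)).elim
    · exact Or.inl h
    · exact Or.inr h
  have free4 : ∀ y ∈ P4.support, G.Adj v y → y = x4 ∨ y = x1 := by
    intro y hy hvy
    rcases hNmem y ⟨hsub4 y hy, hvy⟩ with h | h | h | h
    · exact Or.inr h
    · rw [h] at hy; exact (L24 x2 sm2 hy).elim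
    · rw [h] at hy; exact (n34 (L34 x3 sm3 hy)).elim
    · exact Or.inl h
  -- each segment is induced
  have ind1 : ∀ x y : V, x ∈ P1.support → y ∈ P1.support → G.Adj x y → s(x, y) ∈ P1.edges := by
    intro x y hx hy hxy
    rcases hGadjE x y (hsub1 x hx) (hsub1 y hy) hxy with h | h | h | h
    · exact h
    · exact absurd ((L12 x hx (Walk.fst_mem_support_of_mem_edges P2 h)).trans
        (L12 y hy (Walk.snd_mem_support_of_mem_edges P2 h)).symm) (G.ne_of_adj hxy)
    · exact (L13 x hx (Walk.fst_mem_support_of_mem_edges P3 h)).elim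
    · exact absurd ((L41 x (Walk.fst_mem_support_of_mem_edges P4 h) hx).trans
        (L41 y (Walk.snd_mem_support_of_mem_edges P4 h) hy).symm) (G.ne_of_adj hxy)
  have ind2 : ∀ x y : V, x ∈ P2.support → y ∈ P2.support → G.Adj x y → s(x, y) ∈ P2.edges := by
    intro x y hx hy hxy
    rcases hGadjE x y (hsub2 x hx) (hsub2 y hy) hxy with h | h | h | h
    · exact absurd ((L12 x (Walk.fst_mem_support_of_mem_edges P1 h) hx).trans
        (L12 y (Walk.snd_mem_support_of_mem_edges P1 h) hy).symm) (G.ne_of_adj hxy)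
    · exact h
    · exact absurd ((L23 x hx (Walk.fst_mem_support_of_mem_edges P3 h)).trans
        (L23 y hy (Walk.snd_mem_support_of_mem_edges P3 h)).symm) (G.ne_of_adj hxy)
    · exact (L24 x hx (Walk.fst_mem_support_of_mem_edges P4 h)).elim
  have ind3 : ∀ x y : V, x ∈ P3.support → y ∈ P3.support → G.Adj x y → s(x, y) ∈ P3.edges := by
    intro x y hx hy hxy
    rcases hGadjE x y (hsub3 x hx) (hsub3 y hy) hxy with h | h | h | h
    · exact (L13 x (Walk.fst_mem_support_of_mem_edges P1 h) hx).elim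
    · exact absurd ((L23 x (Walk.fst_mem_support_of_mem_edges P2 h) hx).trans
        (L23 y (Walk.snd_mem_support_of_mem_edges P2 h) hy).symm) (G.ne_of_adj hxy)
    · exact h
    · exact absurd ((L34 x hx (Walk.fst_mem_support_of_mem_edges P4 h)).trans
        (L34 y hy (Walk.snd_mem_support_of_mem_edges P4 h)).symm) (G.ne_of_adj hxy)
  have ind4 : ∀ x y : V, x ∈ P4.support → y ∈ P4.support → G.Adj x y → s(x, y) ∈ P4.edges := by
    intro x y hx hy hxy
    rcases hGadjE x y (hsub4 x hx) (hsub4 y hy) hxy with h | h | h | h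
    · exact absurd ((L41 x hx (Walk.fst_mem_support_of_mem_edges P1 h)).trans
        (L41 y hy (Walk.snd_mem_support_of_mem_edges P1 h)).symm) (G.ne_of_adj hxy)
    · exact (L24 x (Walk.fst_mem_support_of_mem_edges P2 h) hx).elim
    · exact absurd ((L34 x (Walk.fst_mem_support_of_mem_edges P3 h) hx).trans
        (L34 y (Walk.snd_mem_support_of_mem_edges P3 h) hy).symm) (G.ne_of_adj hxy)
    · exact h
  -- odd segments have length one
  have hodd1 : Odd P1.length → P1.length = 1 := by
    intro ho
    by_contra hno
    have h3 : 3 ≤ P1.length := by obtain ⟨k, hk⟩ := ho; omega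
    obtain ⟨h, hOH, hhl⟩ := hole_through v x1 x2 P1 pth1 hv1 hv2.symm iv1 ind1 free1 ho h3
    have := hminOH v h hOH
    omega
  have hodd2 : Odd P2.length → P2.length = 1 := by
    intro ho
    by_contra hno
    have h3 : 3 ≤ P2.length := by obtain ⟨k, hk⟩ := ho; omega
    obtain ⟨h, hOH, hhl⟩ := hole_through v x2 x3 P2 pth2 hv2 hv3.symm iv2 ind2 free2 ho h3
    have := hminOH v h hOH
    omega
  have hodd3 : Odd P3.length → P3.length = 1 := by
    intro ho
    by_contra hno
    have h3 : 3 ≤ P3.length := by obtain ⟨k, hk⟩ := ho; omega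
    obtain ⟨h, hOH, hhl⟩ := hole_through v x3 x4 P3 pth3 hv3 hv4.symm iv3 ind3 free3 ho h3
    have := hminOH v h hOH
    omega
  have hodd4 : Odd P4.length → P4.length = 1 := by
    intro ho
    by_contra hno
    have h3 : 3 ≤ P4.length := by obtain ⟨k, hk⟩ := ho; omega
    obtain ⟨h, hOH, hhl⟩ := hole_through v x4 x1 P4 pth4 hv4 hv1.symm iv4 ind4 free4 ho h3
    have := hminOH v h hOH
    omega
  -- length-one segments give adjacencies on c
  have hadj1 : P1.length = 1 → G.Adj x1 x2 ∧ c.toSubgraph.Adj x1 x2 := by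
    intro h1
    obtain ⟨ha, he⟩ := walk_length_one P1 h1
    refine ⟨ha, ?_⟩
    rw [toSubgraph_adj_iff_mem_edges]
    exact (hdE _).mp ((hedge_loc _).mpr (Or.inl (by rw [he]; exact List.mem_singleton_self _)))
  have hadj2 : P2.length = 1 → G.Adj x2 x3 ∧ c.toSubgraph.Adj x2 x3 := by
    intro h1
    obtain ⟨ha, he⟩ := walk_length_one P2 h1
    refine ⟨ha, ?_⟩
    rw [toSubgraph_adj_iff_mem_edges]
    exact (hdE _).mp ((hedge_loc _).mpr (Or.inr (Or.inl
      (by rw [he]; exact List.mem_singleton_self _))))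
  have hadj3 : P3.length = 1 → G.Adj x3 x4 ∧ c.toSubgraph.Adj x3 x4 := by
    intro h1
    obtain ⟨ha, he⟩ := walk_length_one P3 h1
    refine ⟨ha, ?_⟩
    rw [toSubgraph_adj_iff_mem_edges]
    exact (hdE _).mp ((hedge_loc _).mpr (Or.inr (Or.inr (Or.inl
      (by rw [he]; exact List.mem_singleton_self _)))))
  have hadj4 : P4.length = 1 → G.Adj x4 x1 ∧ c.toSubgraph.Adj x4 x1 := by
    intro h1
    obtain ⟨ha, he⟩ := walk_length_one P4 h1
    refine ⟨ha, ?_⟩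
    rw [toSubgraph_adj_iff_mem_edges]
    exact (hdE _).mp ((hedge_loc _).mpr (Or.inr (Or.inr (Or.inr
      (by rw [he]; exact List.mem_singleton_self _)))))
  -- non-adjacencies
  have nadj13 : ¬ G.Adj x1 x3 := by
    intro h
    rcases hGadjE x1 x3 hx1c hx3N.1 h with h' | h' | h' | h'
    · exact L13 x3 (Walk.snd_mem_support_of_mem_edges P1 h') sm3
    · exact n12 (L12 x1 sm1 (Walk.fst_mem_support_of_mem_edges P2 h'))
    · exact hne41 (L34 x1 (Walk.fst_mem_support_of_mem_edges P3 h') em4).symm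
    · exact n34 (L34 x3 sm3 (Walk.snd_mem_support_of_mem_edges P4 h'))
  have nadj24 : ¬ G.Adj x2 x4 := by
    intro h
    rcases hGadjE x2 x4 hx2N.1 hx4N.1 h with h' | h' | h' | h'
    · exact hne41 (L41 x4 sm4 (Walk.snd_mem_support_of_mem_edges P1 h'))
    · exact L24 x4 (Walk.snd_mem_support_of_mem_edges P2 h') sm4
    · exact n23 (L23 x2 sm2 (Walk.fst_mem_support_of_mem_edges P3 h'))
    · exact L24 x2 sm2 (Walk.fst_mem_support_of_mem_edges P4 h')
  have nadj12 : P1.length ≠ 1 → ¬ G.Adj x1 x2 := by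
    intro hno h
    rcases hGadjE x1 x2 hx1c hx2N.1 h with h' | h' | h' | h'
    · exact hno (path_edge_ends P1 pth1 h')
    · exact n12 (L12 x1 sm1 (Walk.fst_mem_support_of_mem_edges P2 h'))
    · exact L13 x1 sm1 (Walk.fst_mem_support_of_mem_edges P3 h')
    · exact L24 x2 sm2 (Walk.snd_mem_support_of_mem_edges P4 h')
  have nadj23 : P2.length ≠ 1 → ¬ G.Adj x2 x3 := by
    intro hno h
    rcases hGadjE x2 x3 hx2N.1 hx3N.1 h with h' | h' | h' | h'
    · exact L13 x3 (Walk.snd_mem_support_of_mem_edges P1 h') sm3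
    · exact hno (path_edge_ends P2 pth2 h')
    · exact n23 (L23 x2 sm2 (Walk.fst_mem_support_of_mem_edges P3 h'))
    · exact L24 x2 sm2 (Walk.fst_mem_support_of_mem_edges P4 h')
  have nadj34 : P3.length ≠ 1 → ¬ G.Adj x3 x4 := by
    intro hno h
    rcases hGadjE x3 x4 hx3N.1 hx4N.1 h with h' | h' | h' | h'
    · exact L13 x3 (Walk.fst_mem_support_of_mem_edges P1 h') sm3
    · exact L24 x4 (Walk.snd_mem_support_of_mem_edges P2 h') sm4
    · exact hno (path_edge_ends P3 pth3 h')
    · exact n34 (L34 x3 sm3 (Walk.fst_mem_support_of_mem_edges P4 h'))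
  have nadj41 : P4.length ≠ 1 → ¬ G.Adj x4 x1 := by
    intro hno h
    rcases hGadjE x4 x1 hx4N.1 hx1c h with h' | h' | h' | h'
    · exact hne41 (L41 x4 sm4 (Walk.fst_mem_support_of_mem_edges P1 h'))
    · exact L24 x4 (Walk.fst_mem_support_of_mem_edges P2 h') sm4
    · exact hne41 (L34 x1 (Walk.snd_mem_support_of_mem_edges P3 h') em4).symm
    · exact hno (path_edge_ends P4 pth4 h')
  -- final case analysis on parities
  have hE1 : P1.length = 1 ∨ ∃ k, P1.length = 2 * k := by
    rcases Nat.even_or_odd P1.length with hh | hh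
    · obtain ⟨k, hk⟩ := hh; exact Or.inr ⟨k, by omega⟩
    · exact Or.inl (hodd1 hh)
  have hE2 : P2.length = 1 ∨ ∃ k, P2.length = 2 * k := by
    rcases Nat.even_or_odd P2.length with hh | hh
    · obtain ⟨k, hk⟩ := hh; exact Or.inr ⟨k, by omega⟩
    · exact Or.inl (hodd2 hh)
  have hE3 : P3.length = 1 ∨ ∃ k, P3.length = 2 * k := by
    rcases Nat.even_or_odd P3.length with hh | hh
    · obtain ⟨k, hk⟩ := hh; exact Or.inr ⟨k, by omega⟩
    · exact Or.inl (hodd3 hh)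
  have hE4 : P4.length = 1 ∨ ∃ k, P4.length = 2 * k := by
    rcases Nat.even_or_odd P4.length with hh | hh
    · obtain ⟨k, hk⟩ := hh; exact Or.inr ⟨k, by omega⟩
    · exact Or.inl (hodd4 hh)
  clear_value P4 P3 P2 P1 d3 d2 d
  clear hP1def hP2def hP3def hP4def hd2def hd3def hd hNdef hv hindE hNd hx2min hx3min hP1free hP2free hmemd2 hmemd3 hedge_loc hGadjE htail
    hdS hdE hdcyc hdlen hsp1 hsp2 hsp3 hD hs1 hs2 hs3 hs4 o1 o2 o3 o4 nd1 nd2 nd3 nd4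
    dj12 dj13 dj14 dj23 dj24 dj34 L12 L23 L34 L41 L13 L24 pth1 pth2 pth3 pth4
    hsub1 hsub2 hsub3 hsub4 hsubd2 hsubd3 sm1 sm2 sm3 sm4 em1 em2 em3 em4
    iv1 iv2 iv3 iv4 free1 free2 free3 free4 ind1 ind2 ind3 ind4 hodd1 hodd2 hodd3 hodd4
    hNmem hNfin hminOH hindc hcyc hx2d hx3d2 hx4d3 hx1N hx2N1 hx3N2 hx4N3 hne1 hne2
  rcases hE1 with h1 | ⟨k1, hk1⟩ <;> rcases hE2 with h2 | ⟨k2, hk2⟩ <;>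
    rcases hE3 with h3 | ⟨k3, hk3⟩ <;> rcases hE4 with h4' | ⟨k4, hk4⟩
  · omega
  · -- (1,1,1,even) : jewel x1-x2-x3-x4
    exact Or.inr (Or.inl ⟨x1, x2, x3, x4, v, nodup4 n12 n13 n14 n23 n24 n34,
      (hadj1 h1).2, (hadj2 h2).2, (hadj3 h3).2, hv1, hv4⟩)
  · -- (1,1,even,1) : jewel x4-x1-x2-x3
    exact Or.inr (Or.inl ⟨x4, x1, x2, x3, v, nodup4 hne41 hne42 hne43 n12 n13 n23,
      (hadj4 h4').2, (hadj1 h1).2, (hadj2 h2).2, hv4, hv3⟩)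
  · omega
  · -- (1,even,1,1) : jewel x3-x4-x1-x2
    exact Or.inr (Or.inl ⟨x3, x4, x1, x2, v, nodup4 n34 hne31 hne32 hne41 hne42 n12,
      (hadj3 h3).2, (hadj4 h4').2, (hadj1 h1).2, hv3, hv2⟩)
  · omega
  · omega
  · -- (1,even,even,even) : exactly one pair, order x1 x2 x3 x4
    exact Or.inl ⟨x1, x2, x3, x4, nodup4 n12 n13 n14 n23 n24 n34, hNeq, (hadj1 h1).1,
      nadj13, (fun h => nadj41 (by omega) h.symm), nadj23 (by omega), nadj24,
      nadj34 (by omega)⟩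
  · -- (even,1,1,1) : jewel x2-x3-x4-x1
    exact Or.inr (Or.inl ⟨x2, x3, x4, x1, v, nodup4 n23 n24 hne21 n34 hne31 hne41,
      (hadj2 h2).2, (hadj3 h3).2, (hadj4 h4').2, hv2, hv1⟩)
  · omega
  · omega
  · -- (even,1,even,even) : order x2 x3 x4 x1
    refine Or.inl ⟨x2, x3, x4, x1, nodup4 n23 n24 hne21 n34 hne31 hne41, ?_, (hadj2 h2).1,
      nadj24, (fun h => nadj12 (by omega) h.symm), nadj34 (by omega),
      (fun h => nadj13 h.symm), nadj41 (by omega)⟩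
    rw [hNeq]
    ext a
    simp only [Set.mem_insert_iff, Set.mem_singleton_iff]
    tauto
  · omega
  · -- (even,even,1,even) : order x3 x4 x1 x2
    refine Or.inl ⟨x3, x4, x1, x2, nodup4 n34 hne31 hne32 hne41 hne42 n12, ?_, (hadj3 h3).1,
      (fun h => nadj13 h.symm), (fun h => nadj23 (by omega) h.symm), nadj41 (by omega),
      (fun h => nadj24 h.symm), nadj12 (by omega)⟩
    rw [hNeq]
    ext a
    simp only [Set.mem_insert_iff, Set.mem_singleton_iff]
    tauto
  · -- (even,even,even,1) : order x4 x1 x2 x3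
    refine Or.inl ⟨x4, x1, x2, x3, nodup4 hne41 hne42 hne43 n12 n13 n23, ?_, (hadj4 h4').1,
      (fun h => nadj24 h.symm), (fun h => nadj34 (by omega) h.symm), nadj12 (by omega),
      nadj13, nadj23 (by omega)⟩
    rw [hNeq]
    ext a
    simp only [Set.mem_insert_iff, Set.mem_singleton_iff]
    tauto
  · omega

end SOH
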